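/- (Unconditional bound on the numerical solution.) Assume all frequencies are nonzero (ω_j ≠ 0 for all j) and that the minimal frequency ω satisfies ω ≥ (1/2)c₀²‖A‖ + 1. Then for all n ∈ ℕ, (1/2)‖q_n‖² + (1/2)‖q̇_n‖² ≤ |ℋ(q_0, q̇_0)|, and consequently ‖q_n‖ is bounded by a constant depending only on c₀, ‖A‖, ‖q_0‖, ‖Ωq_0‖, ‖q̇_0‖. -/

import Mathlib

open scoped BigOperators

/-- `sinc ξ = sin ξ / ξ` with `sinc 0 = 1`. -/
noncomputable def sinc (x : ℝ) : ℝ := if x = 0 then 1 else Real.sin x / x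

/-- Entrywise (diagonal-matrix) action of a real function family on `ℂ^d`. -/
noncomputable def dOp {d : ℕ} (f : Fin d → ℝ) (q : EuclideanSpace ℂ (Fin d)) :
    EuclideanSpace ℂ (Fin d) := WithLp.toLp 2 (fun i => (f i : ℂ) * q i)

/-- Position update of the trigonometric integrator for the linear force `g(q) = -A q`:
`q_{n+1} = cos(hΩ) q_n + h sinc(hΩ) q̇_n + ½h² sinc(hΩ) Ψ₁ g(Φ q_n)`. -/
noncomputable def trigStepQ {d : ℕ} (h : ℝ) (ω : Fin d → ℝ) (ψ₁ φ : ℝ → ℝ)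
    (A : EuclideanSpace ℂ (Fin d) →L[ℂ] EuclideanSpace ℂ (Fin d))
    (q p : EuclideanSpace ℂ (Fin d)) : EuclideanSpace ℂ (Fin d) :=
  dOp (fun i => Real.cos (h * ω i)) q + h • dOp (fun i => sinc (h * ω i)) p
    + (h ^ 2 / 2) • dOp (fun i => sinc (h * ω i))
        (dOp (fun i => ψ₁ (h * ω i)) (-(A (dOp (fun i => φ (h * ω i)) q))))

/-- Velocity update of the trigonometric integrator for the linear force `g(q) = -A q`:
`q̇_{n+1} = -Ω sin(hΩ) q_n + cos(hΩ) q̇_n + ½h (cos(hΩ) Ψ₁ g(Φ q_n) + Ψ₁ g(Φ q_{n+1}))`. -/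
noncomputable def trigStepP {d : ℕ} (h : ℝ) (ω : Fin d → ℝ) (ψ₁ φ : ℝ → ℝ)
    (A : EuclideanSpace ℂ (Fin d) →L[ℂ] EuclideanSpace ℂ (Fin d))
    (q p : EuclideanSpace ℂ (Fin d)) : EuclideanSpace ℂ (Fin d) :=
  -(dOp (fun i => ω i * Real.sin (h * ω i)) q) + dOp (fun i => Real.cos (h * ω i)) p
    + (h / 2) • (dOp (fun i => Real.cos (h * ω i))
          (dOp (fun i => ψ₁ (h * ω i)) (-(A (dOp (fun i => φ (h * ω i)) q))))
        + dOp (fun i => ψ₁ (h * ω i))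
            (-(A (dOp (fun i => φ (h * ω i)) (trigStepQ h ω ψ₁ φ A q p)))))

/-- The modified energy
`ℋ(q,q̇) = ½‖Ωq‖² + ½‖q̇‖² + ½ Re((cos(hΩ)Φq)* A Φq) − ⅛h²‖Ψ₁ A Φq‖²`. -/
noncomputable def modEnergy {d : ℕ} (h : ℝ) (ω : Fin d → ℝ) (ψ₁ φ : ℝ → ℝ)
    (A : EuclideanSpace ℂ (Fin d) →L[ℂ] EuclideanSpace ℂ (Fin d))
    (q p : EuclideanSpace ℂ (Fin d)) : ℝ :=
  (1 / 2) * ‖dOp ω q‖ ^ 2 + (1 / 2) * ‖p‖ ^ 2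
    + (1 / 2) * (inner (𝕜 := ℂ) (dOp (fun i => Real.cos (h * ω i)) (dOp (fun i => φ (h * ω i)) q))
        (A (dOp (fun i => φ (h * ω i)) q))).re
    - (1 / 8) * h ^ 2 * ‖dOp (fun i => ψ₁ (h * ω i)) (A (dOp (fun i => φ (h * ω i)) q))‖ ^ 2

/-- The total energy `H(q,q̇) = ½‖Ωq‖² + ½‖q̇‖² + ½ q* A q` of `q̈ = -Ω²q - Aq`. -/
noncomputable def energy {d : ℕ} (ω : Fin d → ℝ)
    (A : EuclideanSpace ℂ (Fin d) →L[ℂ] EuclideanSpace ℂ (Fin d))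
    (q p : EuclideanSpace ℂ (Fin d)) : ℝ :=
  (1 / 2) * ‖dOp ω q‖ ^ 2 + (1 / 2) * ‖p‖ ^ 2 + (1 / 2) * (inner (𝕜 := ℂ) q (A q)).re


/-! ### Auxiliary: real bilinear form and diagonal-operator calculus -/

noncomputable def Bf {d : ℕ} (x y : EuclideanSpace ℂ (Fin d)) : ℝ :=
  (inner (𝕜 := ℂ) x y).re

section Baux
variable {d : ℕ}

lemma Bf_symm (x y : EuclideanSpace ℂ (Fin d)) : Bf x y = Bf y x := by
  unfold Bf
  rw [← inner_conj_symm x y]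
  exact Complex.conj_re _

lemma Bf_add_left (x y z : EuclideanSpace ℂ (Fin d)) : Bf (x + y) z = Bf x z + Bf y z := by
  unfold Bf; rw [inner_add_left]; simp

lemma Bf_add_right (x y z : EuclideanSpace ℂ (Fin d)) : Bf x (y + z) = Bf x y + Bf x z := by
  unfold Bf; rw [inner_add_right]; simp

lemma Bf_neg_left (x y : EuclideanSpace ℂ (Fin d)) : Bf (-x) y = -Bf x y := by
  unfold Bf; rw [inner_neg_left]; simp

lemma Bf_neg_right (x y : EuclideanSpace ℂ (Fin d)) : Bf x (-y) = -Bf x y := by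
  unfold Bf; rw [inner_neg_right]; simp

lemma Bf_smul_left (r : ℝ) (x y : EuclideanSpace ℂ (Fin d)) : Bf (r • x) y = r * Bf x y := by
  unfold Bf
  have : (r : ℂ) • x = r • x := by
    simp
  rw [← this, inner_smul_left]
  simp

lemma Bf_smul_right (r : ℝ) (x y : EuclideanSpace ℂ (Fin d)) : Bf x (r • y) = r * Bf x y := by
  unfold Bf
  have : (r : ℂ) • y = r • y := by simp
  rw [← this, inner_smul_right]
  simp

lemma Bf_self (x : EuclideanSpace ℂ (Fin d)) : Bf x x = ‖x‖ ^ 2 := by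
  unfold Bf
  have := inner_self_eq_norm_sq (𝕜 := ℂ) x
  simpa using this

lemma Bf_A {A : EuclideanSpace ℂ (Fin d) →L[ℂ] EuclideanSpace ℂ (Fin d)}
    (hA : IsSelfAdjoint A) (x y : EuclideanSpace ℂ (Fin d)) : Bf (A x) y = Bf x (A y) := by
  exact congrArg Complex.re ((ContinuousLinearMap.isSelfAdjoint_iff_isSymmetric.mp hA) x y)

lemma Bf_abs_le (x y : EuclideanSpace ℂ (Fin d)) : |Bf x y| ≤ ‖x‖ * ‖y‖ := by
  unfold Bf
  refine le_trans (Complex.abs_re_le_norm _) ?_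
  have := norm_inner_le_norm (𝕜 := ℂ) x y
  simpa using this

lemma dOp_apply (f : Fin d → ℝ) (x : EuclideanSpace ℂ (Fin d)) (i : Fin d) :
    dOp f x i = (f i : ℂ) * x i := rfl

lemma dOp_dOp (f g : Fin d → ℝ) (x : EuclideanSpace ℂ (Fin d)) :
    dOp f (dOp g x) = dOp (fun i => f i * g i) x := by
  ext i; simp [dOp]; ring

lemma dOp_congr {f g : Fin d → ℝ} (h : ∀ i, f i = g i) (x : EuclideanSpace ℂ (Fin d)) :
    dOp f x = dOp g x := by
  ext i; simp [dOp, h i]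

lemma dOp_add (f : Fin d → ℝ) (x y : EuclideanSpace ℂ (Fin d)) :
    dOp f (x + y) = dOp f x + dOp f y := by
  ext i; simp [dOp]; ring

lemma dOp_smul (f : Fin d → ℝ) (r : ℝ) (x : EuclideanSpace ℂ (Fin d)) :
    dOp f (r • x) = r • dOp f x := by
  ext i; simp [dOp, Complex.real_smul]; ring

lemma dOp_fun_add (f g : Fin d → ℝ) (x : EuclideanSpace ℂ (Fin d)) :
    dOp (fun i => f i + g i) x = dOp f x + dOp g x := by
  ext i; simp [dOp]; ring

lemma dOp_one (x : EuclideanSpace ℂ (Fin d)) : dOp (fun _ => (1 : ℝ)) x = x := by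
  ext i; simp [dOp]

lemma Bf_dOp_left (g : Fin d → ℝ) (x y : EuclideanSpace ℂ (Fin d)) :
    Bf (dOp g x) y = Bf x (dOp g y) := by
  unfold Bf
  congr 1
  simp only [PiLp.inner_apply, RCLike.inner_apply, dOp_apply]
  refine Finset.sum_congr rfl fun i _ => ?_
  simp only [map_mul, Complex.conj_ofReal]
  ring

lemma Bf_expand3 (v1 v2 v3 : EuclideanSpace ℂ (Fin d)) :
    Bf (v1 + v2 + v3) (v1 + v2 + v3)
      = Bf v1 v1 + Bf v2 v2 + Bf v3 v3 + 2 * Bf v1 v2 + 2 * Bf v1 v3 + 2 * Bf v2 v3 := by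
  simp only [Bf_add_left, Bf_add_right]
  rw [Bf_symm v2 v1, Bf_symm v3 v1, Bf_symm v3 v2]; ring

lemma Bf_expandP (v1 v2 v3 v4 : EuclideanSpace ℂ (Fin d)) :
    Bf (-v1 + v2 + v3 + v4) (-v1 + v2 + v3 + v4)
      = Bf v1 v1 + Bf v2 v2 + Bf v3 v3 + Bf v4 v4
        - 2 * Bf v1 v2 - 2 * Bf v1 v3 - 2 * Bf v1 v4
        + 2 * Bf v2 v3 + 2 * Bf v2 v4 + 2 * Bf v3 v4 := by
  simp only [Bf_add_left, Bf_add_right, Bf_neg_left, Bf_neg_right]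
  rw [Bf_symm v2 v1, Bf_symm v3 v1, Bf_symm v4 v1, Bf_symm v3 v2, Bf_symm v4 v2, Bf_symm v4 v3]
  ring

/-- Core algebraic identity: exact conservation of the modified energy, in normal form. -/
lemma core_conserve (A : EuclideanSpace ℂ (Fin d) →L[ℂ] EuclideanSpace ℂ (Fin d))
    (hA : IsSelfAdjoint A) (c s sg f ω D : Fin d → ℝ)
    (hcs : ∀ i, c i ^ 2 + s i ^ 2 = 1) (hs : ∀ i, ω i * sg i = s i)
    (hD : ∀ i, D i = sg i * f i)
    (q p x u a z Q U α w P : EuclideanSpace ℂ (Fin d))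
    (hx : x = dOp ω q) (hu : u = dOp f q) (ha : a = A u)
    (hz : z = (-(2⁻¹ : ℝ)) • dOp D a)
    (hQ : Q = dOp c q + dOp sg p + dOp sg z)
    (hU : U = dOp f Q) (hα : α = A U)
    (hw : w = (-(2⁻¹ : ℝ)) • dOp D α)
    (hP : P = -(dOp s x) + dOp c p + dOp c z + w) :
    2⁻¹ * Bf (dOp ω Q) (dOp ω Q) + 2⁻¹ * Bf P P + 2⁻¹ * Bf (dOp c U) α
      - 8⁻¹ * Bf (dOp D α) (dOp D α)
    = 2⁻¹ * Bf x x + 2⁻¹ * Bf p p + 2⁻¹ * Bf (dOp c u) a - 8⁻¹ * Bf (dOp D a) (dOp D a) := by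
  -- Pythagoras and commutation helpers
  have pyth : ∀ v1 v2 : EuclideanSpace ℂ (Fin d),
      Bf (dOp c v1) (dOp c v2) + Bf (dOp s v1) (dOp s v2) = Bf v1 v2 := by
    intro v1 v2
    rw [Bf_dOp_left, dOp_dOp, Bf_dOp_left, dOp_dOp, ← Bf_add_right, ← dOp_fun_add,
      dOp_congr (f := fun i => c i * c i + s i * s i) (g := fun _ => 1)
        (fun i => by show c i * c i + s i * s i = 1; linear_combination hcs i) v2, dOp_one]
  have comm : ∀ v1 v2 : EuclideanSpace ℂ (Fin d),
      Bf (dOp c v1) (dOp s v2) = Bf (dOp s v1) (dOp c v2) := by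
    intro v1 v2
    rw [Bf_dOp_left, dOp_dOp, Bf_dOp_left, dOp_dOp,
      dOp_congr (f := fun i => c i * s i) (g := fun i => s i * c i)
        (fun i => mul_comm _ _) v2]
  -- Step normal forms
  have hQω : dOp ω Q = dOp c x + dOp s p + dOp s z := by
    subst hQ hx
    ext i
    simp only [dOp_apply, PiLp.add_apply]
    rw [← hs i]
    push_cast
    ring
  have n1 : Bf (dOp ω Q) (dOp ω Q)
      = Bf (dOp c x) (dOp c x) + Bf (dOp s p) (dOp s p) + Bf (dOp s z) (dOp s z)
        + 2 * Bf (dOp c x) (dOp s p) + 2 * Bf (dOp c x) (dOp s z)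
        + 2 * Bf (dOp s p) (dOp s z) := by
    rw [hQω]; exact Bf_expand3 _ _ _
  have n2 : Bf P P
      = Bf (dOp s x) (dOp s x) + Bf (dOp c p) (dOp c p) + Bf (dOp c z) (dOp c z) + Bf w w
        - 2 * Bf (dOp s x) (dOp c p) - 2 * Bf (dOp s x) (dOp c z) - 2 * Bf (dOp s x) w
        + 2 * Bf (dOp c p) (dOp c z) + 2 * Bf (dOp c p) w + 2 * Bf (dOp c z) w := by
    rw [hP]; exact Bf_expandP _ _ _ _
  have n3 := pyth x x
  have n4 := pyth p p
  have n5 := pyth z z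
  have n6 := comm x p
  have n7 := comm x z
  have n8 := pyth p z
  -- the w-terms
  have v7 : dOp D (dOp s x) = dOp (fun i => s i ^ 2 * f i) q := by
    rw [hx]; ext i
    simp only [dOp_apply]
    rw [hD i, ← hs i]; push_cast; ring
  have t7 : Bf (dOp s x) w = -(2⁻¹) * Bf (dOp (fun i => s i ^ 2 * f i) q) α := by
    rw [hw, Bf_smul_right, ← Bf_dOp_left, v7]
  have v8 : dOp D (dOp c p) = dOp (fun i => c i * D i) p := by
    ext i; simp only [dOp_apply]; push_cast; ring
  have t8 : Bf (dOp c p) w = -(2⁻¹) * Bf (dOp (fun i => c i * D i) p) α := by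
    rw [hw, Bf_smul_right, ← Bf_dOp_left, v8]
  have v9 : dOp D (dOp c z) = (-(2⁻¹ : ℝ)) • dOp (fun i => c i * D i * D i) a := by
    rw [hz]; ext i
    simp only [dOp_apply, PiLp.smul_apply, Complex.real_smul]
    push_cast; ring
  have t9 : Bf (dOp c z) w = 4⁻¹ * Bf (dOp (fun i => c i * D i * D i) a) α := by
    rw [hw, Bf_smul_right, ← Bf_dOp_left, v9, Bf_smul_left]; ring
  have hU2 : dOp c U = dOp (fun i => c i ^ 2 * f i) q + dOp (fun i => c i * D i) p
      + (-(2⁻¹ : ℝ)) • dOp (fun i => c i * D i * D i) a := by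
    rw [hU, hQ, hz]; ext i
    simp only [dOp_apply, PiLp.add_apply, PiLp.smul_apply, Complex.real_smul]
    rw [hD i]; push_cast; ring
  have t10 : Bf (dOp c U) α
      = Bf (dOp (fun i => c i ^ 2 * f i) q) α + Bf (dOp (fun i => c i * D i) p) α
        + (-(2⁻¹)) * Bf (dOp (fun i => c i * D i * D i) a) α := by
    rw [hU2, Bf_add_left, Bf_add_left, Bf_smul_left]
  have t11 : Bf (dOp (fun i => s i ^ 2 * f i) q) α + Bf (dOp (fun i => c i ^ 2 * f i) q) α
      = Bf u α := by
    rw [← Bf_add_left, ← dOp_fun_add,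
      dOp_congr (f := fun i => s i ^ 2 * f i + c i ^ 2 * f i) (g := f)
        (fun i => by show s i ^ 2 * f i + c i ^ 2 * f i = f i
                     linear_combination (f i) * (hcs i)) q, hu]
  have hpz : Bf p z = -(2⁻¹) * Bf p (dOp D a) := by
    rw [hz, Bf_smul_right]
  have hzz2 : Bf z z = -(2⁻¹) * Bf z (dOp D a) := by
    nth_rewrite 2 [hz]
    rw [Bf_smul_right]
  have vfs : dOp (fun i => f i * sg i) a = dOp D a :=
    dOp_congr (fun i => by show f i * sg i = D i; rw [hD i]; ring) a
  have t12 : Bf u α = Bf (dOp c u) a + (-2) * Bf p z + (-2) * Bf z z := by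
    have e1 : Bf u α = Bf a (dOp f Q) := by
      rw [hα, ← Bf_A hA, ← ha, hU]
    have e2 : Bf a (dOp f Q) = Bf a (dOp (fun i => f i * c i) q)
        + Bf a (dOp (fun i => f i * sg i) p) + Bf a (dOp (fun i => f i * sg i) z) := by
      rw [hQ, dOp_add, dOp_add, dOp_dOp, dOp_dOp, dOp_dOp, Bf_add_right, Bf_add_right]
    have e3 : dOp (fun i => f i * c i) q = dOp c u := by
      rw [hu, dOp_dOp]
      exact dOp_congr (fun i => by show f i * c i = c i * f i; ring) q
    have e4 : Bf a (dOp (fun i => f i * sg i) p) = -2 * Bf p z := by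
      rw [← Bf_dOp_left, vfs, Bf_symm]
      linarith [hpz]
    have e5 : Bf a (dOp (fun i => f i * sg i) z) = -2 * Bf z z := by
      rw [← Bf_dOp_left, vfs, Bf_symm]
      linarith [hzz2]
    rw [e1, e2, e3, e4, e5, Bf_symm a (dOp c u)]
  have hBww : Bf w w = 4⁻¹ * Bf (dOp D α) (dOp D α) := by
    rw [hw, Bf_smul_left, Bf_smul_right]; ring
  have hBzz : Bf z z = 4⁻¹ * Bf (dOp D a) (dOp D a) := by
    rw [hz, Bf_smul_left, Bf_smul_right]; ring
  linarith [n1, n2, n3, n4, n5, n6, n7, n8, t7, t8, t9, t10, t11, t12, hBww, hBzz]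

end Baux

/-! ### Bridges to the normal form -/

section Bridge
variable {d : ℕ} (h : ℝ) (ω : Fin d → ℝ) (ψ₁ φ : ℝ → ℝ)
  (A : EuclideanSpace ℂ (Fin d) →L[ℂ] EuclideanSpace ℂ (Fin d))
  (q p : EuclideanSpace ℂ (Fin d))

lemma stepQ_eq :
    trigStepQ h ω ψ₁ φ A q p
      = dOp (fun i => Real.cos (h * ω i)) q + dOp (fun i => h * sinc (h * ω i)) p
        + dOp (fun i => h * sinc (h * ω i))
            ((-(2⁻¹ : ℝ)) • dOp (fun i => h * ψ₁ (h * ω i)) (A (dOp (fun i => φ (h * ω i)) q))) := by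
  unfold trigStepQ
  ext i
  simp only [dOp_apply, PiLp.add_apply, PiLp.smul_apply, PiLp.neg_apply, Complex.real_smul]
  push_cast
  ring

lemma stepP_eq :
    trigStepP h ω ψ₁ φ A q p
      = -(dOp (fun i => Real.sin (h * ω i)) (dOp ω q)) + dOp (fun i => Real.cos (h * ω i)) p
        + dOp (fun i => Real.cos (h * ω i))
            ((-(2⁻¹ : ℝ)) • dOp (fun i => h * ψ₁ (h * ω i)) (A (dOp (fun i => φ (h * ω i)) q)))
        + (-(2⁻¹ : ℝ)) • dOp (fun i => h * ψ₁ (h * ω i))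
            (A (dOp (fun i => φ (h * ω i)) (trigStepQ h ω ψ₁ φ A q p))) := by
  unfold trigStepP
  ext i
  simp only [dOp_apply, PiLp.add_apply, PiLp.smul_apply, PiLp.neg_apply, Complex.real_smul]
  push_cast
  ring

lemma modEnergy_eq :
    modEnergy h ω ψ₁ φ A q p
      = 2⁻¹ * Bf (dOp ω q) (dOp ω q) + 2⁻¹ * Bf p p
        + 2⁻¹ * Bf (dOp (fun i => Real.cos (h * ω i)) (dOp (fun i => φ (h * ω i)) q))
            (A (dOp (fun i => φ (h * ω i)) q))
        - 8⁻¹ * Bf (dOp (fun i => h * ψ₁ (h * ω i)) (A (dOp (fun i => φ (h * ω i)) q)))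
            (dOp (fun i => h * ψ₁ (h * ω i)) (A (dOp (fun i => φ (h * ω i)) q))) := by
  have h2 : dOp (fun i => h * ψ₁ (h * ω i)) (A (dOp (fun i => φ (h * ω i)) q))
      = h • dOp (fun i => ψ₁ (h * ω i)) (A (dOp (fun i => φ (h * ω i)) q)) := by
    ext i
    simp only [dOp_apply, PiLp.smul_apply, Complex.real_smul]
    push_cast; ring
  have e3 : 8⁻¹ * Bf (dOp (fun i => h * ψ₁ (h * ω i)) (A (dOp (fun i => φ (h * ω i)) q)))
        (dOp (fun i => h * ψ₁ (h * ω i)) (A (dOp (fun i => φ (h * ω i)) q)))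
      = (1 / 8) * h ^ 2 * ‖dOp (fun i => ψ₁ (h * ω i)) (A (dOp (fun i => φ (h * ω i)) q))‖ ^ 2 := by
    rw [h2, Bf_smul_left, Bf_smul_right, Bf_self]; ring
  unfold modEnergy
  rw [e3, Bf_self, Bf_self]
  unfold Bf
  ring

lemma modEnergy_step (hh0 : 0 < h) (hωne : ∀ i, ω i ≠ 0)
    (hψφ : ∀ ξ : ℝ, ψ₁ ξ = sinc ξ * φ ξ) (hA : IsSelfAdjoint A) :
    modEnergy h ω ψ₁ φ A (trigStepQ h ω ψ₁ φ A q p) (trigStepP h ω ψ₁ φ A q p)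
      = modEnergy h ω ψ₁ φ A q p := by
  have hs : ∀ i, ω i * ((fun i => h * sinc (h * ω i)) i) = (fun i => Real.sin (h * ω i)) i := by
    intro i
    show ω i * (h * sinc (h * ω i)) = Real.sin (h * ω i)
    have hx : h * ω i ≠ 0 := mul_ne_zero (ne_of_gt hh0) (hωne i)
    rw [sinc, if_neg hx]
    field_simp
    rw [mul_comm (ω i), mul_div_cancel_right₀ _ (hωne i)]
  have hD : ∀ i, (fun i => h * ψ₁ (h * ω i)) i
      = (fun i => h * sinc (h * ω i)) i * (fun i => φ (h * ω i)) i := by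
    intro i
    show h * ψ₁ (h * ω i) = (h * sinc (h * ω i)) * φ (h * ω i)
    rw [hψφ]; ring
  rw [stepP_eq, stepQ_eq, modEnergy_eq, modEnergy_eq]
  exact core_conserve A hA _ _ _ _ ω _ (fun i => Real.cos_sq_add_sin_sq _) hs hD q p
    _ _ _ _ _ _ _ _ _ rfl rfl rfl rfl rfl rfl rfl rfl rfl

end Bridge

/-! ### Norm estimates -/

section Est
variable {d : ℕ}

lemma norm_sq_sum (x : EuclideanSpace ℂ (Fin d)) : ‖x‖ ^ 2 = ∑ i, ‖x i‖ ^ 2 := by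
  rw [EuclideanSpace.norm_eq, Real.sq_sqrt]
  positivity

lemma dOp_norm_le {g : Fin d → ℝ} {M : ℝ} (hM : 0 ≤ M) (hg : ∀ i, |g i| ≤ M)
    (x : EuclideanSpace ℂ (Fin d)) : ‖dOp g x‖ ≤ M * ‖x‖ := by
  have h2 : ‖dOp g x‖ ^ 2 ≤ (M * ‖x‖) ^ 2 := by
    rw [norm_sq_sum, mul_pow, norm_sq_sum, Finset.mul_sum]
    refine Finset.sum_le_sum fun i _ => ?_
    have : ‖dOp g x i‖ = |g i| * ‖x i‖ := by
      rw [dOp_apply, norm_mul, Complex.norm_real, Real.norm_eq_abs]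
    rw [this]
    have h3 : |g i| * |g i| ≤ M * M := mul_le_mul (hg i) (hg i) (abs_nonneg _) hM
    nlinarith [h3, sq_nonneg (‖x i‖), norm_nonneg (x i)]
  calc ‖dOp g x‖ = Real.sqrt (‖dOp g x‖ ^ 2) := (Real.sqrt_sq (norm_nonneg _)).symm
    _ ≤ Real.sqrt ((M * ‖x‖) ^ 2) := Real.sqrt_le_sqrt h2
    _ = M * ‖x‖ := Real.sqrt_sq (by positivity)

lemma dOp_norm_ge {g : Fin d → ℝ} {m : ℝ} (hm : 0 ≤ m) (hg : ∀ i, m ≤ |g i|)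
    (x : EuclideanSpace ℂ (Fin d)) : m ^ 2 * ‖x‖ ^ 2 ≤ ‖dOp g x‖ ^ 2 := by
  rw [norm_sq_sum, norm_sq_sum, Finset.mul_sum]
  refine Finset.sum_le_sum fun i _ => ?_
  have : ‖dOp g x i‖ = |g i| * ‖x i‖ := by
    rw [dOp_apply, norm_mul, Complex.norm_real, Real.norm_eq_abs]
  rw [this]
  have h3 : m * m ≤ |g i| * |g i| := mul_le_mul (hg i) (hg i) hm (abs_nonneg _)
  nlinarith [h3, sq_nonneg (‖x i‖), norm_nonneg (x i)]

end Est

/-- Lemma 3, unconditional bound on the numerical solution: if all frequencies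
are nonzero and `ω ≥ ½c₀²‖A‖ + 1`, then `½‖q_n‖² + ½‖q̇_n‖² ≤ |ℋ(q_0,q̇_0)|` for all `n`, and
consequently `‖q_n‖` is bounded by a constant depending only on
`c₀, ‖A‖, ‖q_0‖, ‖Ωq_0‖, ‖q̇_0‖`. -/
theorem unconditional_bound_numerical_solution :
    ∃ C : ℝ → ℝ → ℝ → ℝ → ℝ → ℝ,
      ∀ {d : ℕ} (h : ℝ), 0 < h → h ≤ 1 →
      ∀ (ω : Fin d → ℝ), (∀ i, 0 ≤ ω i) → (∀ i, ω i ≠ 0) →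
      ∀ (ψ₁ φ : ℝ → ℝ) (c₀ : ℝ),
        (∀ ξ : ℝ, ψ₁ ξ = sinc ξ * φ ξ) →
        (∀ ξ : ℝ, |ψ₁ ξ| ≤ c₀) → (∀ ξ : ℝ, |φ ξ| ≤ c₀) →
      ∀ A : EuclideanSpace ℂ (Fin d) →L[ℂ] EuclideanSpace ℂ (Fin d), IsSelfAdjoint A →
      ∀ ωmin : ℝ, (∃ i, ω i = ωmin) → (∀ i, ωmin ≤ ω i) →
        (1 / 2) * c₀ ^ 2 * ‖A‖ + 1 ≤ ωmin →
      ∀ q p : ℕ → EuclideanSpace ℂ (Fin d),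
        (∀ n : ℕ, q (n + 1) = trigStepQ h ω ψ₁ φ A (q n) (p n)) →
        (∀ n : ℕ, p (n + 1) = trigStepP h ω ψ₁ φ A (q n) (p n)) →
      ∀ n : ℕ,
        (1 / 2) * ‖q n‖ ^ 2 + (1 / 2) * ‖p n‖ ^ 2 ≤ |modEnergy h ω ψ₁ φ A (q 0) (p 0)| ∧
        ‖q n‖ ≤ C c₀ ‖A‖ ‖q 0‖ ‖dOp ω (q 0)‖ ‖p 0‖ := by
  refine ⟨fun c₀ nA nq nΩ np => Real.sqrt (2 * (2⁻¹ * nΩ ^ 2 + 2⁻¹ * np ^ 2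
    + 2⁻¹ * (c₀ ^ 2 * nA * nq ^ 2) + 8⁻¹ * (c₀ ^ 2 * nA * nq) ^ 2)), ?_⟩
  intro d h hh0 hh1 ω hω0 hωne ψ₁ φ c₀ hψφ hψb hφb A hA ωmin hex hmin hωmin q p hqs hps n
  have hc0 : 0 ≤ c₀ := le_trans (abs_nonneg _) (hψb 0)
  have hAn : 0 ≤ ‖A‖ := norm_nonneg _
  have hωminpos : 0 ≤ ωmin := by nlinarith [sq_nonneg c₀]
  -- exact conservation of the modified energy
  have hcons : ∀ n : ℕ, modEnergy h ω ψ₁ φ A (q n) (p n) = modEnergy h ω ψ₁ φ A (q 0) (p 0) := by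
    intro n
    induction n with
    | zero => rfl
    | succ n ih =>
      rw [hqs n, hps n, modEnergy_step h ω ψ₁ φ A (q n) (p n) hh0 hωne hψφ hA, ih]
  -- basic bounds for a fixed state
  have key : ∀ qv pv : EuclideanSpace ℂ (Fin d),
      (2⁻¹ * ‖qv‖ ^ 2 + 2⁻¹ * ‖pv‖ ^ 2 ≤ modEnergy h ω ψ₁ φ A qv pv) ∧
      |modEnergy h ω ψ₁ φ A qv pv| ≤ 2⁻¹ * ‖dOp ω qv‖ ^ 2 + 2⁻¹ * ‖pv‖ ^ 2
        + 2⁻¹ * (c₀ ^ 2 * ‖A‖ * ‖qv‖ ^ 2) + 8⁻¹ * (c₀ ^ 2 * ‖A‖ * ‖qv‖) ^ 2 := by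
    intro qv pv
    have b1 : ωmin ^ 2 * ‖qv‖ ^ 2 ≤ ‖dOp ω qv‖ ^ 2 :=
      dOp_norm_ge hωminpos (fun i => by rw [abs_of_nonneg (hω0 i)]; exact hmin i) qv
    have b2 : ‖dOp (fun i => φ (h * ω i)) qv‖ ≤ c₀ * ‖qv‖ :=
      dOp_norm_le hc0 (fun i => hφb _) qv
    have b3 : ‖A (dOp (fun i => φ (h * ω i)) qv)‖ ≤ ‖A‖ * ‖dOp (fun i => φ (h * ω i)) qv‖ :=
      A.le_opNorm _
    have b4 : ‖dOp (fun i => Real.cos (h * ω i)) (dOp (fun i => φ (h * ω i)) qv)‖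
        ≤ 1 * ‖dOp (fun i => φ (h * ω i)) qv‖ :=
      dOp_norm_le zero_le_one (fun i => Real.abs_cos_le_one _) _
    have b3' : ‖A (dOp (fun i => φ (h * ω i)) qv)‖ ≤ ‖A‖ * (c₀ * ‖qv‖) :=
      b3.trans (mul_le_mul_of_nonneg_left b2 hAn)
    have b5 : |Bf (dOp (fun i => Real.cos (h * ω i)) (dOp (fun i => φ (h * ω i)) qv))
          (A (dOp (fun i => φ (h * ω i)) qv))|
        ≤ c₀ ^ 2 * ‖A‖ * ‖qv‖ ^ 2 := by
      refine (Bf_abs_le _ _).trans ?_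
      have h1 : ‖dOp (fun i => Real.cos (h * ω i)) (dOp (fun i => φ (h * ω i)) qv)‖
          ≤ c₀ * ‖qv‖ := by
        refine b4.trans ?_; rw [one_mul]; exact b2
      calc ‖dOp (fun i => Real.cos (h * ω i)) (dOp (fun i => φ (h * ω i)) qv)‖
            * ‖A (dOp (fun i => φ (h * ω i)) qv)‖
          ≤ (c₀ * ‖qv‖) * (‖A‖ * (c₀ * ‖qv‖)) :=
            mul_le_mul h1 b3' (norm_nonneg _) (by positivity)
        _ = c₀ ^ 2 * ‖A‖ * ‖qv‖ ^ 2 := by ring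
    have b6 : ‖dOp (fun i => h * ψ₁ (h * ω i)) (A (dOp (fun i => φ (h * ω i)) qv))‖
        ≤ c₀ * ‖A (dOp (fun i => φ (h * ω i)) qv)‖ := by
      refine dOp_norm_le hc0 (fun i => ?_) _
      rw [abs_mul, abs_of_pos hh0]
      calc h * |ψ₁ (h * ω i)| ≤ 1 * c₀ :=
            mul_le_mul hh1 (hψb _) (abs_nonneg _) zero_le_one
        _ = c₀ := one_mul c₀
    have b6' : ‖dOp (fun i => h * ψ₁ (h * ω i)) (A (dOp (fun i => φ (h * ω i)) qv))‖ ^ 2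
        ≤ (c₀ ^ 2 * ‖A‖ * ‖qv‖) ^ 2 := by
      have hle : ‖dOp (fun i => h * ψ₁ (h * ω i)) (A (dOp (fun i => φ (h * ω i)) qv))‖
          ≤ c₀ ^ 2 * ‖A‖ * ‖qv‖ := by
        refine b6.trans ?_
        calc c₀ * ‖A (dOp (fun i => φ (h * ω i)) qv)‖ ≤ c₀ * (‖A‖ * (c₀ * ‖qv‖)) :=
              mul_le_mul_of_nonneg_left b3' hc0
          _ = c₀ ^ 2 * ‖A‖ * ‖qv‖ := by ring
      exact pow_le_pow_left₀ (norm_nonneg _) hle 2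
    have hEeq := modEnergy_eq h ω ψ₁ φ A qv pv
    rw [Bf_self, Bf_self, Bf_self] at hEeq
    -- abstract to scalars
    set X := ‖dOp ω qv‖ ^ 2 with hX
    set R := Bf (dOp (fun i => Real.cos (h * ω i)) (dOp (fun i => φ (h * ω i)) qv))
        (A (dOp (fun i => φ (h * ω i)) qv)) with hR
    set T := ‖dOp (fun i => h * ψ₁ (h * ω i)) (A (dOp (fun i => φ (h * ω i)) qv))‖ ^ 2 with hT
    have hT0 : 0 ≤ T := sq_nonneg _
    have hb5 := abs_le.mp b5
    have hkey : (2⁻¹ * (c₀ ^ 2 * ‖A‖) + 1) ^ 2 * ‖qv‖ ^ 2 ≤ ωmin ^ 2 * ‖qv‖ ^ 2 := by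
      refine mul_le_mul_of_nonneg_right ?_ (sq_nonneg _)
      refine pow_le_pow_left₀ (by positivity) (by linarith) 2
    have hX0 : 0 ≤ X := by rw [hX]; positivity
    have f1 : (2⁻¹ * (c₀ ^ 2 * ‖A‖) + 1) ^ 2 * ‖qv‖ ^ 2 ≤ X := le_trans hkey b1
    constructor
    · rw [hEeq]
      linarith [f1, hb5.1, b6', hT0]
    · rw [hEeq, abs_le]
      constructor
      · linarith [hb5.1, b6', hX0, sq_nonneg ‖pv‖, hT0]
      · linarith [hb5.2, hT0]
  -- part 1
  have part1 : (1 / 2) * ‖q n‖ ^ 2 + (1 / 2) * ‖p n‖ ^ 2 ≤ |modEnergy h ω ψ₁ φ A (q 0) (p 0)| := by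
    have h1 := (key (q n) (p n)).1
    have h2 : modEnergy h ω ψ₁ φ A (q n) (p n) ≤ |modEnergy h ω ψ₁ φ A (q 0) (p 0)| := by
      rw [hcons n]; exact le_abs_self _
    linarith
  refine ⟨part1, ?_⟩
  -- part 2
  have h3 := (key (q 0) (p 0)).2
  have h4 : ‖q n‖ ^ 2 ≤ 2 * (2⁻¹ * ‖dOp ω (q 0)‖ ^ 2 + 2⁻¹ * ‖p 0‖ ^ 2
      + 2⁻¹ * (c₀ ^ 2 * ‖A‖ * ‖q 0‖ ^ 2) + 8⁻¹ * (c₀ ^ 2 * ‖A‖ * ‖q 0‖) ^ 2) := by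
    have := sq_nonneg ‖p n‖
    linarith [part1, h3]
  show ‖q n‖ ≤ Real.sqrt (2 * (2⁻¹ * ‖dOp ω (q 0)‖ ^ 2 + 2⁻¹ * ‖p 0‖ ^ 2
      + 2⁻¹ * (c₀ ^ 2 * ‖A‖ * ‖q 0‖ ^ 2) + 8⁻¹ * (c₀ ^ 2 * ‖A‖ * ‖q 0‖) ^ 2))
  rw [← Real.sqrt_sq (norm_nonneg (q n))]
  exact Real.sqrt_le_sqrt h4
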